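/- Fix an agent i and let π* be an optimal partition of the FA game with friend sets (F_j)_{j∈N}. Define a new FA game on N by keeping F'_i = F_i and setting F'_j = π*(j) \ {j} for every agent j ≠ i (so each coalition of π* becomes a bidirectional clique, every member of π*(i) other than i declares i a friend, and all friendships across coalitions among agents other than i are removed; the resulting friendship graph is an i-centered generalized octopus graph with head π*(i) \ {i} and tentacles the remaining coalitions of π*). Then π* is also an optimal partition of the new game. -/

import Mathlib

open Finset

/-- FA utility of agent `i` with friend set `t` for a coalition `C` containing her:
`u_i(C) = |C ∩ F_i| − |C ∩ E_i| / n`, where `E_i = N \ (F_i ∪ {i})`. -/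
def faUtil (n : ℕ) (t : Finset (Fin n)) (i : Fin n) (C : Finset (Fin n)) : ℚ :=
  ((C ∩ t).card : ℚ) - ((C \ (t ∪ {i})).card : ℚ) / (n : ℚ)

/-- Social welfare of a partition of the agents (`SW(π) = Σ_i u_i(π(i))`). -/
def faSW (n : ℕ) (F : Fin n → Finset (Fin n))
    (π : Finpartition (univ : Finset (Fin n))) : ℚ :=
  ∑ C ∈ π.parts, ∑ i ∈ C, faUtil n (F i) i C

/- Auxiliary lemmas -/

lemma faCardSplit {α : Type*} [DecidableEq α] {j : α} {Fj C : Finset α}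
    (hj : j ∉ Fj) (hjC : j ∈ C) :
    C.card = (C ∩ Fj).card + (C \ (Fj ∪ {j})).card + 1 := by
  have h1 : C ∩ (Fj ∪ {j}) = insert j (C ∩ Fj) := by
    rw [inter_union_distrib_left, inter_singleton_of_mem hjC, union_comm, ← insert_eq]
  have h2 := Finset.card_inter_add_card_sdiff C (Fj ∪ {j})
  rw [h1, Finset.card_insert_of_notMem (by simp [hj])] at h2
  omega

lemma faKey {n : ℕ} (hn : 0 < n) {j : Fin n} (Fj : Finset (Fin n)) (hj : j ∉ Fj)
    {P A T : Finset (Fin n)} (hjP : j ∈ P) (hjA : j ∈ A)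
    (h1 : A ∩ P ⊆ T) (h2 : T ⊆ A) :
    faUtil n (P.erase j) j A - faUtil n Fj j T
      ≤ faUtil n (P.erase j) j P - faUtil n Fj j P := by
  have hnQ : (0:ℚ) < n := by exact_mod_cast hn
  have hPe : P.erase j ∪ {j} = P := by rw [union_comm, ← insert_eq, insert_erase hjP]
  have hAe : A ∩ P.erase j = (A ∩ P).erase j := inter_erase j A P
  have cb : (A ∩ P).card = ((A ∩ P) ∩ Fj).card + ((A ∩ P) \ (Fj ∪ {j})).card + 1 :=
    faCardSplit hj (mem_inter.mpr ⟨hjA, hjP⟩)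
  have cc : P.card = (P ∩ Fj).card + (P \ (Fj ∪ {j})).card + 1 := faCardSplit hj hjP
  have ca : ((A ∩ P) ∩ Fj).card ≤ (T ∩ Fj).card :=
    card_le_card (inter_subset_inter h1 Subset.rfl)
  have ce : ((A ∩ P) \ (Fj ∪ {j})).card ≤ (P \ (Fj ∪ {j})).card :=
    card_le_card (sdiff_subset_sdiff inter_subset_right Subset.rfl)
  have cd : (T \ (Fj ∪ {j})).card ≤ ((A ∩ P) \ (Fj ∪ {j})).card + (A \ P).card := by
    refine le_trans (card_le_card ?_) (card_union_le _ _)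
    intro x hx
    simp only [mem_sdiff, mem_union, mem_inter] at *
    obtain ⟨hxT, hxE⟩ := hx
    have hxA := h2 hxT
    by_cases hxP : x ∈ P
    · exact Or.inl ⟨⟨hxA, hxP⟩, hxE⟩
    · exact Or.inr ⟨hxA, hxP⟩
  have h3 : ((A ∩ P).erase j).card + 1 = (A ∩ P).card :=
    card_erase_add_one (mem_inter.mpr ⟨hjA, hjP⟩)
  have h4 : (P.erase j).card + 1 = P.card := card_erase_add_one hjP
  unfold faUtil
  rw [hPe, hAe, inter_eq_right.mpr (erase_subset j P), sdiff_self]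
  simp only [bot_eq_empty, card_empty, Nat.cast_zero, zero_div, sub_zero]
  have dd : ((T \ (Fj ∪ {j})).card : ℚ)/n
      ≤ (((A ∩ P) \ (Fj ∪ {j})).card : ℚ)/n + ((A \ P).card : ℚ)/n := by
    rw [← add_div]
    gcongr
    exact_mod_cast cd
  have ee : (((A ∩ P) \ (Fj ∪ {j})).card : ℚ)/n ≤ ((P \ (Fj ∪ {j})).card : ℚ)/n := by
    gcongr
  have cbQ : ((A ∩ P).card : ℚ) = ((A ∩ P) ∩ Fj).card + ((A ∩ P) \ (Fj ∪ {j})).card + 1 := by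
    exact_mod_cast cb
  have ccQ : (P.card : ℚ) = (P ∩ Fj).card + (P \ (Fj ∪ {j})).card + 1 := by exact_mod_cast cc
  have caQ : (((A ∩ P) ∩ Fj).card : ℚ) ≤ ((T ∩ Fj).card : ℚ) := by exact_mod_cast ca
  have ceQ : (((A ∩ P) \ (Fj ∪ {j})).card : ℚ) ≤ ((P \ (Fj ∪ {j})).card : ℚ) := by
    exact_mod_cast ce
  have h3Q : (((A ∩ P).erase j).card : ℚ) + 1 = ((A ∩ P).card : ℚ) := by exact_mod_cast h3
  have h4Q : ((P.erase j).card : ℚ) + 1 = (P.card : ℚ) := by exact_mod_cast h4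
  linarith

lemma faSW_part (n : ℕ) (F : Fin n → Finset (Fin n))
    (π : Finpartition (univ : Finset (Fin n))) :
    faSW n F π = ∑ j : Fin n, faUtil n (F j) j (π.part j) := by
  unfold faSW
  have h1 : ∑ j : Fin n, faUtil n (F j) j (π.part j)
      = ∑ j ∈ π.parts.biUnion id, faUtil n (F j) j (π.part j) := by
    rw [π.biUnion_parts]
  rw [h1, Finset.sum_biUnion π.supIndep.pairwiseDisjoint]
  refine Finset.sum_congr rfl fun C hC => Finset.sum_congr rfl fun j hj => ?_
  rw [π.part_eq_of_mem hC (by exact hj)]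

/-- Fix agent `i` and an optimal partition `π` of the FA game `F`. If `F'` keeps
`F' i = F i` and sets `F' j = π(j) \ {j}` for every `j ≠ i` (each coalition of `π`
becomes a bidirectional clique and all other friendships of agents other than `i`
are removed), then `π` is also optimal for `F'`. -/
theorem stmt4 (n : ℕ) (hn : 0 < n) (F F' : Fin n → Finset (Fin n))
    (hF : ∀ j, j ∉ F j) (i : Fin n)
    (π : Finpartition (univ : Finset (Fin n)))
    (hopt : ∀ σ : Finpartition (univ : Finset (Fin n)), faSW n F σ ≤ faSW n F π)
    (hFi : F' i = F i)
    (hF' : ∀ j : Fin n, j ≠ i → ∀ C ∈ π.parts, j ∈ C → F' j = C.erase j) :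
    ∀ σ : Finpartition (univ : Finset (Fin n)), faSW n F' σ ≤ faSW n F' π := by
  intro σ
  classical
  set Si := σ.part i with hSi
  set pt : Fin n → Finset (Fin n) :=
    fun j => if j ∈ Si then Si else (σ.part j ∩ π.part j) \ Si with hpt
  have hmem_pt : ∀ j, j ∈ pt j := by
    intro j
    by_cases hj : j ∈ Si
    · simp [hpt, hj]
    · simp [hpt, hj, σ.mem_part (mem_univ j), π.mem_part (mem_univ j)]
  set myS : Setoid (Fin n) :=
    ⟨fun a b => pt a = pt b, ⟨fun _ => rfl, Eq.symm, Eq.trans⟩⟩ with hmyS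
  haveI : DecidableRel myS.r := fun a b => by
    change Decidable (pt a = pt b); infer_instance
  set τ : Finpartition (univ : Finset (Fin n)) := Finpartition.ofSetoid myS with hτ
  have hpart : ∀ j, τ.part j = pt j := by
    intro j
    ext k
    rw [hτ, Finpartition.mem_part_ofSetoid_iff_rel]
    show pt j = pt k ↔ k ∈ pt j
    constructor
    · intro h; rw [h]; exact hmem_pt k
    · intro hk
      by_cases hj : j ∈ Si
      · have hk' : k ∈ Si := by simpa [hpt, hj] using hk
        simp [hpt, hj, hk']
      · simp only [hpt, if_neg hj, mem_sdiff, mem_inter] at hk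
        obtain ⟨⟨hkσ, hkπ⟩, hkSi⟩ := hk
        have e1 : σ.part k = σ.part j := σ.part_eq_of_mem (σ.part_mem.2 (mem_univ j)) hkσ
        have e2 : π.part k = π.part j := π.part_eq_of_mem (π.part_mem.2 (mem_univ j)) hkπ
        simp [hpt, hj, hkSi, e1, e2]
  have hkey : ∀ j : Fin n,
      faUtil n (F' j) j (σ.part j) - faUtil n (F j) j (τ.part j)
        ≤ faUtil n (F' j) j (π.part j) - faUtil n (F j) j (π.part j) := by
    intro j
    by_cases hji : j = i
    · subst hji
      have hτj : τ.part j = σ.part j := by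
        rw [hpart]
        simp [hpt, show j ∈ Si from σ.mem_part (mem_univ j)]
        exact hSi
      rw [hFi, hτj]
      simp
    · have hFj' : F' j = (π.part j).erase j :=
        hF' j hji _ (π.part_mem.2 (mem_univ j)) (π.mem_part (mem_univ j))
      rw [hFj', hpart]
      have hh1 : σ.part j ∩ π.part j ⊆ pt j := by
        by_cases hj : j ∈ Si
        · have hσ : σ.part j = Si := σ.part_eq_of_mem (σ.part_mem.2 (mem_univ i)) hj
          intro x hx
          simp only [hpt, if_pos hj]
          exact hσ ▸ (mem_inter.mp hx).1
        · intro x hx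
          simp only [hpt, if_neg hj, mem_sdiff]
          refine ⟨hx, fun hxSi => hj ?_⟩
          have e1 : σ.part x = σ.part j :=
            σ.part_eq_of_mem (σ.part_mem.2 (mem_univ j)) (mem_inter.mp hx).1
          have e2 : σ.part x = Si := σ.part_eq_of_mem (σ.part_mem.2 (mem_univ i)) hxSi
          rw [← e2, e1]
          exact σ.mem_part (mem_univ j)
      have hh2 : pt j ⊆ σ.part j := by
        by_cases hj : j ∈ Si
        · have hσ : σ.part j = Si := σ.part_eq_of_mem (σ.part_mem.2 (mem_univ i)) hj
          simp only [hpt, if_pos hj]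
          exact hσ.ge
        · simp only [hpt, if_neg hj]
          exact sdiff_subset.trans inter_subset_left
      exact faKey hn (F j) (hF j) (π.mem_part (mem_univ j)) (σ.mem_part (mem_univ j)) hh1 hh2
  have H : faSW n F' σ - faSW n F τ ≤ faSW n F' π - faSW n F π := by
    rw [faSW_part, faSW_part, faSW_part, faSW_part, ← Finset.sum_sub_distrib,
      ← Finset.sum_sub_distrib]
    exact Finset.sum_le_sum fun j _ => hkey j
  have := hopt τ
  linarith
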